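/- (Adaptive FSAI determinant ratio) In the setting of the adaptive FSAI update, with H = FA, Δ = det((F A Fᵀ)_{kk}) and Δ^{(c)} = det((F^{(c)} A F^{(c)ᵀ})_{kk}), it holds that Δ^{(c)}/Δ = det(W_c − H_{kc}ᵀ H_{kk}⁻¹ H_{kc}) / det(W_c). -/

import Mathlib

open Matrix

/-- Scalar index type for a block structure with `n` blocks of sizes `m i`. -/
abbrev BIdx {n : ℕ} (m : Fin n → ℕ) := (i : Fin n) × Fin (m i)

/-- The `(i,j)` block of a block-structured matrix. -/
def blk {n : ℕ} {m : Fin n → ℕ} (A : Matrix (BIdx m) (BIdx m) ℝ) (i j : Fin n) :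
    Matrix (Fin (m i)) (Fin (m j)) ℝ :=
  fun a b => A ⟨i, a⟩ ⟨j, b⟩

/-- The block-diagonal part `diag_𝔅(A)` of a block-structured matrix. -/
def bdiag {n : ℕ} {m : Fin n → ℕ} (A : Matrix (BIdx m) (BIdx m) ℝ) :
    Matrix (BIdx m) (BIdx m) ℝ :=
  fun p q => if p.1 = q.1 then A p q else 0

/-- The block submatrix `A[S, T]` with block-row indices in `S` and block-column indices in `T`. -/
def subM {n : ℕ} {m : Fin n → ℕ} (A : Matrix (BIdx m) (BIdx m) ℝ) (S T : Finset (Fin n)) :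
    Matrix {p : BIdx m // p.1 ∈ S} {q : BIdx m // q.1 ∈ T} ℝ :=
  fun p q => A p.val q.val

/-- The block row submatrix `A[{i}, T]`. -/
def rowM {n : ℕ} {m : Fin n → ℕ} (A : Matrix (BIdx m) (BIdx m) ℝ) (i : Fin n)
    (T : Finset (Fin n)) : Matrix (Fin (m i)) {q : BIdx m // q.1 ∈ T} ℝ :=
  fun a q => A ⟨i, a⟩ q.val

/-- The block column submatrix `A[S, {i}]`. -/
def colM {n : ℕ} {m : Fin n → ℕ} (A : Matrix (BIdx m) (BIdx m) ℝ) (S : Finset (Fin n))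
    (i : Fin n) : Matrix {p : BIdx m // p.1 ∈ S} (Fin (m i)) ℝ :=
  fun p a => A p.val ⟨i, a⟩

/-- A block sparsity pattern, given by its rows `P i ⊆ {1,…,n}`, is lower triangular and
contains the diagonal. -/
def IsLowerPattern {n : ℕ} (P : Fin n → Finset (Fin n)) : Prop :=
  (∀ i, i ∈ P i) ∧ ∀ i j, j ∈ P i → j ≤ i

/-- `F` is the block-FSAI matrix for `A` based on the pattern `P`: identity diagonal blocks,
zero blocks outside the pattern, and `F[{i}, 𝒫̃ᵢ] = -A[{i}, 𝒫̃ᵢ] A[𝒫̃ᵢ, 𝒫̃ᵢ]⁻¹`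
where `𝒫̃ᵢ = Pᵢ \ {i}`. -/
def IsFSAI {n : ℕ} {m : Fin n → ℕ} (A F : Matrix (BIdx m) (BIdx m) ℝ)
    (P : Fin n → Finset (Fin n)) : Prop :=
  (∀ i, blk F i i = 1) ∧
  (∀ p q : BIdx m, p.1 ≠ q.1 → q.1 ∉ P p.1 → F p q = 0) ∧
  (∀ i, rowM F i ((P i).erase i) =
    -(rowM A i ((P i).erase i)) * (subM A ((P i).erase i) ((P i).erase i))⁻¹)

/-- `S` is the block-diagonal FSAI Schur-complement matrix:
`S_{ii} = A_{ii} - A[{i}, 𝒫̃ᵢ] A[𝒫̃ᵢ, 𝒫̃ᵢ]⁻¹ A[𝒫̃ᵢ, {i}]`. -/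
def IsFSAISchur {n : ℕ} {m : Fin n → ℕ} (A S : Matrix (BIdx m) (BIdx m) ℝ)
    (P : Fin n → Finset (Fin n)) : Prop :=
  (∀ p q : BIdx m, p.1 ≠ q.1 → S p q = 0) ∧
  (∀ i, blk S i i =
    blk A i i - rowM A i ((P i).erase i) * (subM A ((P i).erase i) ((P i).erase i))⁻¹ *
      colM A ((P i).erase i) i)

set_option linter.unusedSectionVars false
set_option linter.unusedVariables false

section Aux
variable {n : ℕ} {m : Fin n → ℕ}
def inc (T : Finset (Fin n)) : Matrix (BIdx m) {p : BIdx m // p.1 ∈ T} ℝ :=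
  fun p q => if p = q.val then 1 else 0
def inb (k : Fin n) : Matrix (BIdx m) (Fin (m k)) ℝ :=
  fun p a => if p = ⟨k, a⟩ then 1 else 0
variable {ι : Type*} [Fintype ι]
lemma mul_inc (B : Matrix ι (BIdx m) ℝ) (T : Finset (Fin n)) :
    B * inc (m := m) T = B.submatrix id Subtype.val := by
  ext x q; simp [Matrix.mul_apply, inc]
lemma inc_tr_mul (B : Matrix (BIdx m) ι ℝ) (T : Finset (Fin n)) :
    (inc (m := m) T)ᵀ * B = B.submatrix Subtype.val id := by
  ext q x; simp [Matrix.mul_apply, inc]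
lemma mul_inb (B : Matrix ι (BIdx m) ℝ) (k : Fin n) :
    B * inb (m := m) k = B.submatrix id (fun a => (⟨k, a⟩ : BIdx m)) := by
  ext x a; simp [Matrix.mul_apply, inb]
lemma inb_tr_mul (B : Matrix (BIdx m) ι ℝ) (k : Fin n) :
    (inb (m := m) k)ᵀ * B = B.submatrix (fun a => (⟨k, a⟩ : BIdx m)) id := by
  ext a x; simp [Matrix.mul_apply, inb]
lemma inbT_mul_mul_inb (B : Matrix (BIdx m) (BIdx m) ℝ) (k j : Fin n) :
    (inb (m := m) k)ᵀ * B * inb (m := m) j = blk B k j := by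
  rw [inb_tr_mul, mul_inb]; ext a b; rfl
lemma inbT_mul_mul_inc (B : Matrix (BIdx m) (BIdx m) ℝ) (k : Fin n) (T : Finset (Fin n)) :
    (inb (m := m) k)ᵀ * B * inc (m := m) T = rowM B k T := by
  rw [inb_tr_mul, mul_inc]; ext a b; rfl
lemma incT_mul_mul_inb (B : Matrix (BIdx m) (BIdx m) ℝ) (T : Finset (Fin n)) (k : Fin n) :
    (inc (m := m) T)ᵀ * B * inb (m := m) k = colM B T k := by
  rw [inc_tr_mul, mul_inb]; ext a b; rfl
lemma incT_mul_mul_inc (B : Matrix (BIdx m) (BIdx m) ℝ) (T T' : Finset (Fin n)) :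
    (inc (m := m) T)ᵀ * B * inc (m := m) T' = subM B T T' := by
  rw [inc_tr_mul, mul_inc]; ext a b; rfl

lemma fsai_row {A F : Matrix (BIdx m) (BIdx m) ℝ} {P : Fin n → Finset (Fin n)}
    (hF : IsFSAI A F P) (k : Fin n) :
    (inb (m := m) k)ᵀ * F =
      (inb (m := m) k)ᵀ + rowM F k ((P k).erase k) * (inc (m := m) ((P k).erase k))ᵀ := by
  ext a p
  rw [inb_tr_mul]
  simp only [Matrix.add_apply, Matrix.submatrix_apply, id_eq, Matrix.transpose_apply,
    Matrix.mul_apply, inc, inb]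
  by_cases hp : p.1 ∈ (P k).erase k
  · have hpk : ¬ (p = (⟨k, a⟩ : BIdx m)) := by
      intro h
      rw [h] at hp
      exact (Finset.notMem_erase k (P k)) hp
    rw [if_neg hpk, zero_add]
    have hc : ∀ q : {q : BIdx m // q.1 ∈ (P k).erase k},
        (rowM F k ((P k).erase k) a q * if p = q.val then 1 else 0) =
          if q = ⟨p, hp⟩ then F ⟨k, a⟩ p else 0 := by
      intro q
      by_cases h : q = (⟨p, hp⟩ : {q : BIdx m // q.1 ∈ (P k).erase k})
      · subst h; simp [rowM]
      · rw [if_neg h, if_neg, mul_zero]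
        intro hq; exact h (Subtype.ext hq.symm)
    rw [Finset.sum_congr rfl (fun q _ => hc q), Finset.sum_ite_eq']
    simp
  · have hzero : ∀ q : {q : BIdx m // q.1 ∈ (P k).erase k}, ¬ (p = q.val) := by
      intro q h; exact hp (h ▸ q.2)
    have hs : (∑ q : {q : BIdx m // q.1 ∈ (P k).erase k},
        rowM F k ((P k).erase k) a q * if p = q.val then 1 else 0) = 0 := by
      refine Finset.sum_eq_zero fun q _ => ?_
      rw [if_neg (hzero q), mul_zero]
    rw [hs, add_zero]
    rcases p with ⟨i, b⟩
    by_cases hik : i = k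
    · subst hik
      have h1 : F ⟨i, a⟩ ⟨i, b⟩ = (1 : Matrix (Fin (m i)) (Fin (m i)) ℝ) a b := by
        rw [← hF.1 i]; rfl
      rw [h1, Matrix.one_apply]
      simp [Sigma.mk.inj_iff, eq_comm]
    · have h0 : F ⟨k, a⟩ ⟨i, b⟩ = 0 := by
        refine hF.2.1 _ _ (Ne.symm hik) ?_
        intro hmem
        exact hp (Finset.mem_erase.2 ⟨hik, hmem⟩)
      rw [h0, if_neg, ]
      intro h
      exact hik (congrArg Sigma.fst h)
end Aux

section Blocks
variable {n : ℕ} {m : Fin n → ℕ}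

lemma blk_FA {A F : Matrix (BIdx m) (BIdx m) ℝ} {P : Fin n → Finset (Fin n)}
    (hF : IsFSAI A F P) (k j : Fin n) :
    blk (F * A) k j = blk A k j -
      rowM A k ((P k).erase k) * (subM A ((P k).erase k) ((P k).erase k))⁻¹ *
        colM A ((P k).erase k) j := by
  have h1 : blk (F * A) k j = ((inb (m := m) k)ᵀ * F) * A * inb (m := m) j := by
    rw [← inbT_mul_mul_inb]
    simp only [Matrix.mul_assoc]
  rw [h1, fsai_row hF k, Matrix.add_mul, Matrix.add_mul, inbT_mul_mul_inb,
    hF.2.2 k]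
  rw [sub_eq_add_neg]
  congr 1
  rw [← incT_mul_mul_inb A ((P k).erase k) j]
  simp only [Matrix.neg_mul, Matrix.mul_assoc]

lemma rowM_FA {A F : Matrix (BIdx m) (BIdx m) ℝ} {P : Fin n → Finset (Fin n)}
    (hF : IsFSAI A F P) (k : Fin n)
    (hS : IsUnit (subM A ((P k).erase k) ((P k).erase k)).det) :
    rowM (F * A) k ((P k).erase k) = 0 := by
  have h1 : rowM (F * A) k ((P k).erase k) =
      ((inb (m := m) k)ᵀ * F) * A * inc (m := m) ((P k).erase k) := by
    rw [← inbT_mul_mul_inc]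
    simp only [Matrix.mul_assoc]
  rw [h1, fsai_row hF k, Matrix.add_mul, Matrix.add_mul, inbT_mul_mul_inc, hF.2.2 k]
  simp only [Matrix.mul_assoc]
  rw [← Matrix.mul_assoc ((inc (m := m) ((P k).erase k))ᵀ) A (inc (m := m) ((P k).erase k)),
    incT_mul_mul_inc, Matrix.nonsing_inv_mul _ hS, Matrix.mul_one, add_neg_cancel]

lemma blk_FAFt {A F : Matrix (BIdx m) (BIdx m) ℝ} {P : Fin n → Finset (Fin n)}
    (hF : IsFSAI A F P) (k : Fin n)
    (hS : IsUnit (subM A ((P k).erase k) ((P k).erase k)).det) :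
    blk (F * A * Fᵀ) k k = blk (F * A) k k := by
  have h1 : blk (F * A * Fᵀ) k k = ((inb (m := m) k)ᵀ * (F * A)) * ((inb (m := m) k)ᵀ * F)ᵀ := by
    rw [Matrix.transpose_mul, Matrix.transpose_transpose, ← inbT_mul_mul_inb]
    simp only [Matrix.mul_assoc]
  rw [h1, fsai_row hF k, Matrix.transpose_add, Matrix.transpose_mul]
  simp only [Matrix.transpose_transpose]
  rw [Matrix.mul_add, inbT_mul_mul_inb, ← Matrix.mul_assoc, inbT_mul_mul_inc,
    rowM_FA hF k hS, Matrix.zero_mul, add_zero]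
end Blocks

lemma posDef_submatrix_inj {N I : Type*} [Fintype N] [DecidableEq N] [Fintype I] [DecidableEq I]
    {M : Matrix N N ℝ} (hM : M.PosDef) {f : I → N} (hf : Function.Injective f) :
    (M.submatrix f f).PosDef := by
  refine Matrix.posDef_iff_dotProduct_mulVec.2 ⟨hM.1.submatrix f, fun x hx => ?_⟩
  set E : Matrix N I ℝ := Matrix.of (fun p i => if p = f i then 1 else 0) with hE
  have hsub : M.submatrix f f = Eᵀ * M * E := by
    ext i j
    simp [Matrix.mul_apply, hE]
  have hEx : ∀ i, (E *ᵥ x) (f i) = x i := by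
    intro i
    simp [Matrix.mulVec, dotProduct, hE, hf.eq_iff]
  have hne : E *ᵥ x ≠ 0 := by
    intro h
    apply hx
    funext i
    have := congrFun h (f i)
    rw [hEx i] at this
    simpa using this
  have hq : star x ⬝ᵥ (M.submatrix f f) *ᵥ x = star (E *ᵥ x) ⬝ᵥ M *ᵥ (E *ᵥ x) := by
    rw [hsub]
    rw [← Matrix.mulVec_mulVec, ← Matrix.mulVec_mulVec]
    rw [Matrix.dotProduct_mulVec (star x), Matrix.vecMul_transpose]
    simp [star_trivial]
  rw [hq]
  exact (Matrix.posDef_iff_dotProduct_mulVec.1 hM).2 hne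

lemma schur_posDef {m' n' : Type*} [Fintype m'] [DecidableEq m'] [Fintype n']
    {A₁ : Matrix m' m' ℝ} (B : Matrix m' n' ℝ) (D : Matrix n' n' ℝ)
    (h : (fromBlocks A₁ B Bᴴ D).PosDef) (hA₁ : A₁.IsHermitian) [Invertible A₁] :
    (D - Bᴴ * A₁⁻¹ * B).PosDef := by
  refine Matrix.posDef_iff_dotProduct_mulVec.2 ⟨?_, ?_⟩
  · exact (Matrix.IsHermitian.fromBlocks₁₁ B D hA₁).1 h.1
  · intro x hx
    have hne : (-((A₁⁻¹ * B) *ᵥ x) ⊕ᵥ x) ≠ 0 := by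
      intro h0
      apply hx
      funext i
      have := congrFun h0 (Sum.inr i)
      simpa using this
    have := (Matrix.posDef_iff_dotProduct_mulVec.1 h).2 hne
    rw [dotProduct_mulVec, Matrix.schur_complement_eq₁₁ B D _ _ hA₁, neg_add_cancel,
      star_zero, zero_vecMul, zero_dotProduct, zero_add] at this
    rw [dotProduct_mulVec]
    exact this

section Equivs
variable {n : ℕ} {m : Fin n → ℕ}

def insEquiv (T : Finset (Fin n)) (k : Fin n) (hk : k ∉ T) :
    ({p : BIdx m // p.1 ∈ T} ⊕ Fin (m k)) ≃ {p : BIdx m // p.1 ∈ insert k T} where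
  toFun := Sum.elim (fun q => ⟨q.val, Finset.mem_insert_of_mem q.2⟩)
    (fun a => ⟨⟨k, a⟩, Finset.mem_insert_self k T⟩)
  invFun p := if h : (p : BIdx m).1 ∈ T then Sum.inl ⟨p, h⟩
    else Sum.inr (Fin.cast (congrArg m (by
      rcases Finset.mem_insert.1 p.2 with h1 | h1
      · exact h1
      · exact absurd h1 h)) (p : BIdx m).2)
  left_inv := by
    rintro (q | a)
    · simp [dif_pos q.2]
    · simp [hk]
  right_inv := by
    rintro ⟨⟨i, b⟩, hp⟩
    by_cases h : i ∈ T
    · simp [dif_pos h]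
    · have hik : i = k := by
        rcases Finset.mem_insert.1 hp with h1 | h1
        · exact h1
        · exact absurd h1 h
      subst hik
      simp [dif_neg h]

lemma subM_insert (A : Matrix (BIdx m) (BIdx m) ℝ) (T : Finset (Fin n)) (k : Fin n) (hk : k ∉ T) :
    (subM A (insert k T) (insert k T)).submatrix (insEquiv (m := m) T k hk) (insEquiv T k hk) =
      fromBlocks (subM A T T) (colM A T k) (rowM A k T) (blk A k k) := by
  ext (p | a) (q | b) <;> rfl
end Equivs

section Dets
variable {n : ℕ} {m : Fin n → ℕ}

lemma det_subM_insert (A : Matrix (BIdx m) (BIdx m) ℝ) (T : Finset (Fin n)) (k : Fin n)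
    (hk : k ∉ T) [Invertible (subM A T T)] :
    (subM A (insert k T) (insert k T)).det =
      (subM A T T).det * (blk A k k - rowM A k T * (subM A T T)⁻¹ * colM A T k).det := by
  rw [← Matrix.det_submatrix_equiv_self (insEquiv (m := m) T k hk), subM_insert A T k hk,
    Matrix.det_fromBlocks₁₁, Matrix.invOf_eq_nonsing_inv]

def insEquiv2 (T : Finset (Fin n)) (k c : Fin n) (hk : k ∉ T) (hc : c ∉ insert k T) :
    ({p : BIdx m // p.1 ∈ T} ⊕ (Fin (m k) ⊕ Fin (m c))) ≃
      {p : BIdx m // p.1 ∈ insert c (insert k T)} :=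
  (Equiv.sumAssoc _ _ _).symm.trans
    (((insEquiv T k hk).sumCongr (Equiv.refl (Fin (m c)))).trans (insEquiv (insert k T) c hc))

lemma subM_insert2 (A : Matrix (BIdx m) (BIdx m) ℝ) (T : Finset (Fin n)) (k c : Fin n)
    (hk : k ∉ T) (hc : c ∉ insert k T) :
    (subM A (insert c (insert k T)) (insert c (insert k T))).submatrix
        (insEquiv2 (m := m) T k c hk hc) (insEquiv2 T k c hk hc) =
      fromBlocks (subM A T T) (fromCols (colM A T k) (colM A T c))
        (fromRows (rowM A k T) (rowM A c T))
        (fromBlocks (blk A k k) (blk A k c) (blk A c k) (blk A c c)) := by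
  ext (p | (a | b)) (q | (a' | b')) <;> rfl

lemma fromBlocks_sub' {l o p q : Type*} (A : Matrix l o ℝ) (B : Matrix l p ℝ)
    (C : Matrix q o ℝ) (D : Matrix q p ℝ) (A' : Matrix l o ℝ) (B' : Matrix l p ℝ)
    (C' : Matrix q o ℝ) (D' : Matrix q p ℝ) :
    fromBlocks A B C D - fromBlocks A' B' C' D' =
      fromBlocks (A - A') (B - B') (C - C') (D - D') := by
  ext (i | i) (j | j) <;> simp [fromBlocks]

lemma det_subM_insert2 (A : Matrix (BIdx m) (BIdx m) ℝ) (T : Finset (Fin n)) (k c : Fin n)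
    (hk : k ∉ T) (hc : c ∉ insert k T)
    [Invertible (subM A T T)]
    [Invertible (blk A k k - rowM A k T * (subM A T T)⁻¹ * colM A T k)] :
    (subM A (insert c (insert k T)) (insert c (insert k T))).det =
      (subM A T T).det *
      ((blk A k k - rowM A k T * (subM A T T)⁻¹ * colM A T k).det *
       ((blk A c c - rowM A c T * (subM A T T)⁻¹ * colM A T c) -
        (blk A c k - rowM A c T * (subM A T T)⁻¹ * colM A T k) *
          (blk A k k - rowM A k T * (subM A T T)⁻¹ * colM A T k)⁻¹ *
        (blk A k c - rowM A k T * (subM A T T)⁻¹ * colM A T c)).det) := by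
  rw [← Matrix.det_submatrix_equiv_self (insEquiv2 (m := m) T k c hk hc),
    subM_insert2 A T k c hk hc, Matrix.det_fromBlocks₁₁, Matrix.invOf_eq_nonsing_inv,
    Matrix.fromRows_mul, Matrix.fromRows_mul_fromCols, fromBlocks_sub',
    Matrix.det_fromBlocks₁₁, Matrix.invOf_eq_nonsing_inv]
end Dets

/-- (Adaptive FSAI determinant ratio) With `H = FA`, `Δ = det((F A Fᵀ)_{kk})`,
`Δ⁽ᶜ⁾ = det((F⁽ᶜ⁾ A F⁽ᶜ⁾ᵀ)_{kk})`, and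
`W_c = A_{cc} - A[{c},𝒫̃ₖ] A[𝒫̃ₖ,𝒫̃ₖ]⁻¹ A[𝒫̃ₖ,{c}]`, one has
`Δ⁽ᶜ⁾/Δ = det(W_c - H_{kc}ᵀ H_{kk}⁻¹ H_{kc}) / det(W_c)`. -/
theorem fsai_adaptive_det_ratio {n : ℕ} {m : Fin n → ℕ}
    (A F F' : Matrix (BIdx m) (BIdx m) ℝ) (P : Fin n → Finset (Fin n))
    (hA : A.PosDef) (hP : IsLowerPattern P)
    (k c : Fin n) (hck : c < k) (hcP : c ∉ P k)
    (hF : IsFSAI A F P)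
    (hF' : IsFSAI A F' (Function.update P k (insert c (P k)))) :
    (blk (F' * A * F'ᵀ) k k).det / (blk (F * A * Fᵀ) k k).det =
      ((blk A c c - rowM A c ((P k).erase k) *
            (subM A ((P k).erase k) ((P k).erase k))⁻¹ * colM A ((P k).erase k) c) -
          (blk (F * A) k c)ᵀ * (blk (F * A) k k)⁻¹ * blk (F * A) k c).det /
        (blk A c c - rowM A c ((P k).erase k) *
            (subM A ((P k).erase k) ((P k).erase k))⁻¹ * colM A ((P k).erase k) c).det := by
  classical
  have hck' : c ≠ k := ne_of_lt hck
  set T := (P k).erase k with hT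
  have hkT : k ∉ T := Finset.notMem_erase k _
  have hcT : c ∉ T := fun h => hcP (Finset.mem_of_mem_erase h)
  have hckT : c ∉ insert k T := by simp [Finset.mem_insert, hck', hcT]
  have hkcT : k ∉ insert c T := by simp [Finset.mem_insert, Ne.symm hck', hkT]
  have hT' : ((Function.update P k (insert c (P k)) k).erase k) = insert c T := by
    rw [Function.update_self, hT, Finset.erase_insert_of_ne hck']
  -- symmetry facts
  have hAt : Aᵀ = A := by
    ext p q
    have := hA.1.apply q p
    simpa using this.symm
  have hsym : ∀ p q : BIdx m, A q p = A p q := by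
    intro p q
    have := congrFun (congrFun hAt q) p
    simpa using this.symm
  -- posdef and invertibility facts
  have hPD : ∀ (S : Finset (Fin n)), (subM A S S).PosDef := fun S =>
    posDef_submatrix_inj hA Subtype.val_injective
  haveI iS : Invertible (subM A T T) :=
    Matrix.invertibleOfIsUnitDet _ (isUnit_iff_ne_zero.2 (hPD T).det_pos.ne')
  haveI iQ : Invertible (subM A (insert c T) (insert c T)) :=
    Matrix.invertibleOfIsUnitDet _ (isUnit_iff_ne_zero.2 (hPD (insert c T)).det_pos.ne')
  have hrowcol : ∀ (S : Finset (Fin n)) (i : Fin n), rowM A i S = (colM A S i)ᴴ := by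
    intro S i
    ext a q
    simp [rowM, colM, Matrix.conjTranspose_apply, hsym]
  have hSchurPD : ∀ (S : Finset (Fin n)) (i : Fin n), i ∉ S → ∀ _ : Invertible (subM A S S),
      (blk A i i - rowM A i S * (subM A S S)⁻¹ * colM A S i).PosDef := by
    intro S i hiS iSS
    have hFBpd : (fromBlocks (subM A S S) (colM A S i) ((colM A S i)ᴴ) (blk A i i)).PosDef := by
      rw [← hrowcol S i, ← subM_insert A S i hiS]
      have h1 : subM A (insert i S) (insert i S) = A.submatrix Subtype.val Subtype.val := rfl
      rw [h1, Matrix.submatrix_submatrix]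
      exact posDef_submatrix_inj hA (Subtype.val_injective.comp (insEquiv S i hiS).injective)
    have := schur_posDef (colM A S i) (blk A i i) hFBpd (hPD S).1
    rwa [← hrowcol S i] at this
  have hHpd : (blk A k k - rowM A k T * (subM A T T)⁻¹ * colM A T k).PosDef :=
    hSchurPD T k hkT iS
  have hWpd : (blk A c c - rowM A c T * (subM A T T)⁻¹ * colM A T c).PosDef :=
    hSchurPD T c hcT iS
  haveI iH : Invertible (blk A k k - rowM A k T * (subM A T T)⁻¹ * colM A T k) :=
    Matrix.invertibleOfIsUnitDet _ (isUnit_iff_ne_zero.2 hHpd.det_pos.ne')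
  -- rewriting the blocks of F and F'
  have hSunit : IsUnit (subM A ((P k).erase k) ((P k).erase k)).det := by
    rw [← hT]; exact isUnit_iff_ne_zero.2 (hPD T).det_pos.ne'
  have hSunit' : IsUnit (subM A ((Function.update P k (insert c (P k)) k).erase k)
      ((Function.update P k (insert c (P k)) k).erase k)).det := by
    rw [hT']; exact isUnit_iff_ne_zero.2 (hPD (insert c T)).det_pos.ne'
  have e2 : blk (F * A) k k = blk A k k - rowM A k T * (subM A T T)⁻¹ * colM A T k := by
    rw [blk_FA hF k k]
  have e1 : blk (F * A * Fᵀ) k k =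
      blk A k k - rowM A k T * (subM A T T)⁻¹ * colM A T k := by
    rw [blk_FAFt hF k hSunit, e2]
  have e3 : blk (F * A) k c = blk A k c - rowM A k T * (subM A T T)⁻¹ * colM A T c := by
    rw [blk_FA hF k c]
  have e4 : (blk (F * A) k c)ᵀ =
      blk A c k - rowM A c T * (subM A T T)⁻¹ * colM A T k := by
    rw [e3, Matrix.transpose_sub, Matrix.transpose_mul, Matrix.transpose_mul,
      Matrix.transpose_nonsing_inv]
    have t1 : (blk A k c)ᵀ = blk A c k := by ext a b; exact hsym _ _
    have t2 : (rowM A k T)ᵀ = colM A T k := by ext q a; exact hsym _ _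
    have t3 : (colM A T c)ᵀ = rowM A c T := by ext a q; exact hsym _ _
    have t4 : (subM A T T)ᵀ = subM A T T := by ext p q; exact hsym _ _
    rw [t1, t2, t3, t4, Matrix.mul_assoc]
  have e5 : blk (F' * A * F'ᵀ) k k = blk A k k -
      rowM A k (insert c T) * (subM A (insert c T) (insert c T))⁻¹ * colM A (insert c T) k := by
    rw [blk_FAFt hF' k hSunit', blk_FA hF' k k, hT']
  -- determinant identities
  have d1 : (subM A (insert k T) (insert k T)).det =
      (subM A T T).det * (blk A k k - rowM A k T * (subM A T T)⁻¹ * colM A T k).det :=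
    det_subM_insert A T k hkT
  have d2 : (subM A (insert c T) (insert c T)).det =
      (subM A T T).det * (blk A c c - rowM A c T * (subM A T T)⁻¹ * colM A T c).det :=
    det_subM_insert A T c hcT
  have d3 : (subM A (insert c (insert k T)) (insert c (insert k T))).det =
      (subM A T T).det *
      ((blk A k k - rowM A k T * (subM A T T)⁻¹ * colM A T k).det *
       ((blk A c c - rowM A c T * (subM A T T)⁻¹ * colM A T c) -
        (blk A c k - rowM A c T * (subM A T T)⁻¹ * colM A T k) *
          (blk A k k - rowM A k T * (subM A T T)⁻¹ * colM A T k)⁻¹ *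
        (blk A k c - rowM A k T * (subM A T T)⁻¹ * colM A T c)).det) :=
    det_subM_insert2 A T k c hkT hckT
  have d4 : (subM A (insert k (insert c T)) (insert k (insert c T))).det =
      (subM A (insert c T) (insert c T)).det *
      (blk A k k - rowM A k (insert c T) * (subM A (insert c T) (insert c T))⁻¹ *
        colM A (insert c T) k).det :=
    det_subM_insert A (insert c T) k hkcT
  have d5 : insert k (insert c T) = insert c (insert k T) := Finset.insert_comm k c T
  rw [d5] at d4
  rw [e1, e2, e4, e3, e5]
  set dT := (subM A T T).det
  set dH := (blk A k k - rowM A k T * (subM A T T)⁻¹ * colM A T k).det with hdH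
  set dW := (blk A c c - rowM A c T * (subM A T T)⁻¹ * colM A T c).det with hdW
  set dZ := ((blk A c c - rowM A c T * (subM A T T)⁻¹ * colM A T c) -
        (blk A c k - rowM A c T * (subM A T T)⁻¹ * colM A T k) *
          (blk A k k - rowM A k T * (subM A T T)⁻¹ * colM A T k)⁻¹ *
        (blk A k c - rowM A k T * (subM A T T)⁻¹ * colM A T c)).det with hdZ
  set dH' := (blk A k k - rowM A k (insert c T) * (subM A (insert c T) (insert c T))⁻¹ *
        colM A (insert c T) k).det with hdH'
  have hdT0 : dT ≠ 0 := (hPD T).det_pos.ne'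
  have hdH0 : dH ≠ 0 := hHpd.det_pos.ne'
  have hdW0 : dW ≠ 0 := hWpd.det_pos.ne'
  have key : dW * dH' = dH * dZ := by
    apply mul_left_cancel₀ hdT0
    rw [d2] at d4
    rw [← mul_assoc, ← d4, d3]
  rw [div_eq_div_iff hdH0 hdW0]
  nlinarith [key]
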